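/- For d ≥ 2 and i with 1 ≤ i ≤ d−1, the derivative of the nodal polynomial of the Chebyshev–Lobatto points 𝓛_d at the interior node a_i = cos(iπ/d) satisfies |w'_{𝓛_d}(a_i)| = 2^{1−d} d. -/

import Mathlib

open Real Finset

/-- The Chebyshev–Lobatto points of degree `d`. -/
noncomputable def lobatto (d : ℕ) : Finset ℝ :=
  (Finset.range (d + 1)).image (fun j : ℕ => Real.cos (j * π / d))

open Polynomial Polynomial.Chebyshev

private lemma T_key : ∀ n : ℕ, (T ℝ n).natDegree ≤ n ∧
    (T ℝ n).coeff n = if n = 0 then 1 else 2 ^ (n - 1) := by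
  intro n
  induction n using Nat.strong_induction_on with
  | _ n ih =>
    match n with
    | 0 => simp
    | 1 => simp
    | (n+2) =>
      obtain ⟨h1d, h1c⟩ := ih (n+1) (by omega)
      obtain ⟨h0d, h0c⟩ := ih n (by omega)
      have hrec : T ℝ ((n:ℤ)+2) = 2 * X * T ℝ ((n:ℤ)+1) - T ℝ (n:ℤ) := T_add_two ℝ n
      have hcast : ((n+2 : ℕ) : ℤ) = (n:ℤ) + 2 := by push_cast; ring
      have hcast1 : ((n+1 : ℕ) : ℤ) = (n:ℤ) + 1 := by push_cast; ring
      rw [hcast, hrec]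
      constructor
      · refine le_trans (natDegree_sub_le _ _) (max_le ?_ (by omega))
        refine le_trans (natDegree_mul_le) ?_
        have : (2 * X : ℝ[X]).natDegree ≤ 1 :=
          le_trans natDegree_mul_le (by simp)
        rw [hcast1] at h1d
        omega
      · have h2 : (2 * X * T ℝ ((n:ℤ)+1)) = C 2 * (T ℝ ((n:ℤ)+1) * X) := by simp only [map_ofNat]; ring
        rw [coeff_sub, h2, coeff_C_mul, coeff_mul_X, ← hcast1, h1c,
          coeff_eq_zero_of_natDegree_lt (by omega)]
        simp [pow_succ]
        ring

private noncomputable def Qpol (d : ℕ) : ℝ[X] :=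
  Polynomial.C ((2:ℝ)^d)⁻¹ * (T ℝ ((d:ℤ)+1) - T ℝ ((d:ℤ)-1))

private lemma Qpol_spec (d : ℕ) (hd : 2 ≤ d) :
    (Qpol d).Monic ∧ (Qpol d).natDegree = d + 1 := by
  set A := T ℝ ((d:ℤ)+1) - T ℝ ((d:ℤ)-1) with hA
  have hc1 : ((d+1 : ℕ) : ℤ) = (d:ℤ) + 1 := by push_cast; ring
  have hc2 : ((d-1 : ℕ) : ℤ) = (d:ℤ) - 1 := by omega
  have h1 := T_key (d+1)
  have h2 := T_key (d-1)
  rw [hc1] at h1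
  rw [hc2] at h2
  have hcoeff : A.coeff (d+1) = 2 ^ d := by
    rw [hA, coeff_sub, h1.2, coeff_eq_zero_of_natDegree_lt (lt_of_le_of_lt h2.1 (by omega))]
    simp
  have hdegle : A.natDegree ≤ d + 1 :=
    le_trans (natDegree_sub_le _ _) (max_le h1.1 (le_trans h2.1 (by omega)))
  have hdeg : A.natDegree = d + 1 :=
    natDegree_eq_of_le_of_coeff_ne_zero hdegle (by rw [hcoeff]; positivity)
  have hlead : A.leadingCoeff = 2 ^ d := by rw [leadingCoeff, hdeg, hcoeff]
  have hne : ((2:ℝ)^d)⁻¹ ≠ 0 := by positivity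
  constructor
  · unfold Polynomial.Monic
    rw [Qpol, leadingCoeff_mul, leadingCoeff_C, hlead]
    field_simp
  · rw [Qpol, natDegree_C_mul hne, hdeg]

private lemma Qpol_root (d : ℕ) (hd : 2 ≤ d) (j : ℕ) :
    (Qpol d).eval (Real.cos (j * π / d)) = 0 := by
  have hd0 : (d:ℝ) ≠ 0 := by positivity
  have e1 : (((d:ℤ):ℝ)+1) * (j * π / d) = j * π + j * π / d := by
    push_cast; field_simp
  have e2 : (((d:ℤ):ℝ)-1) * (j * π / d) = j * π - j * π / d := by
    push_cast; field_simp
  rw [Qpol, eval_mul, eval_C, eval_sub, T_real_cos, T_real_cos]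
  push_cast
  push_cast at e1 e2
  rw [e1, e2, Real.cos_add, Real.cos_sub, Real.sin_nat_mul_pi]
  ring

private lemma lobatto_card (d : ℕ) (hd : 2 ≤ d) : (lobatto d).card = d + 1 := by
  rw [lobatto, Finset.card_image_of_injOn, Finset.card_range]
  intro a ha b hb hab
  simp only [Finset.coe_range, Set.mem_Iio] at ha hb
  have hd0 : (0:ℝ) < d := by positivity
  have key : ∀ n : ℕ, n < d + 1 → (n:ℝ) * π / d ∈ Set.Icc 0 π := by
    intro n hn
    constructor
    · positivity
    · rw [div_le_iff₀ hd0]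
      have : (n:ℝ) ≤ d := by exact_mod_cast Nat.lt_succ_iff.mp hn
      nlinarith [Real.pi_pos]
  have := Real.injOn_cos (key a ha) (key b hb) hab
  have hπ : (0:ℝ) < π / d := by positivity
  field_simp at this
  have h : (a:ℝ) = b := by linarith
  exact_mod_cast h

private lemma prod_eq (d : ℕ) (hd : 2 ≤ d) :
    ∏ a ∈ lobatto d, (X - Polynomial.C a) = Qpol d := by
  obtain ⟨hmon, hdeg⟩ := Qpol_spec d hd
  have hQ0 : Qpol d ≠ 0 := hmon.ne_zero
  have hle : (lobatto d).val ≤ (Qpol d).roots := by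
    rw [Multiset.le_iff_subset (lobatto d).nodup]
    intro a ha
    rw [mem_roots hQ0]
    rw [← Finset.mem_def, lobatto, Finset.mem_image] at ha
    obtain ⟨j, _, rfl⟩ := ha
    exact Qpol_root d hd j
  have hdvd : (∏ a ∈ lobatto d, (X - Polynomial.C a)) ∣ Qpol d := by
    rw [Finset.prod_eq_multiset_prod]
    exact (Multiset.prod_X_sub_C_dvd_iff_le_roots hQ0 _).mpr hle
  obtain ⟨c, hc⟩ := hdvd
  have hPmon : (∏ a ∈ lobatto d, (X - Polynomial.C a)).Monic :=
    monic_prod_of_monic _ _ (fun a _ => monic_X_sub_C a)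
  have hPdeg : (∏ a ∈ lobatto d, (X - Polynomial.C a)).natDegree = d + 1 := by
    rw [natDegree_prod _ _ (fun a _ => X_sub_C_ne_zero a)]
    simp [lobatto_card d hd]
  have hcne : c ≠ 0 := by rintro rfl; simp [hc] at hQ0
  have hcmon : c.Monic := by
    have := congrArg Polynomial.leadingCoeff hc
    rwa [leadingCoeff_mul, hPmon.leadingCoeff, one_mul, hmon.leadingCoeff, eq_comm] at this
  have hcdeg : c.natDegree = 0 := by
    have := congrArg Polynomial.natDegree hc
    rw [natDegree_mul hPmon.ne_zero hcne, hPdeg, hdeg] at this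
    omega
  rw [hc, eq_one_of_monic_natDegree_zero hcmon hcdeg, mul_one]

theorem abs_deriv_nodal_lobatto (d : ℕ) (hd : 2 ≤ d) (i : ℕ)
    (hi1 : 1 ≤ i) (hi2 : i ≤ d - 1) :
    |deriv (fun x : ℝ => ∏ a ∈ lobatto d, (x - a)) (Real.cos (i * π / d))| =
      (2 : ℝ) ^ ((1 : ℤ) - (d : ℤ)) * d := by
  have hd0 : (0:ℝ) < d := by positivity
  set θ : ℝ := i * π / d with hθ
  have hθpos : 0 < θ := by
    rw [hθ]; have : (1:ℝ) ≤ i := by exact_mod_cast hi1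
    positivity
  have hθlt : θ < π := by
    rw [hθ, div_lt_iff₀ hd0]
    have hi : (i:ℝ) < d := by exact_mod_cast (by omega : i < d)
    nlinarith [Real.pi_pos]
  have hs : Real.sin θ ≠ 0 := ne_of_gt (Real.sin_pos_of_pos_of_lt_pi hθpos hθlt)
  -- rewrite the function as polynomial evaluation
  have hfun : (fun x : ℝ => ∏ a ∈ lobatto d, (x - a)) =
      fun x : ℝ => (∏ a ∈ lobatto d, (X - Polynomial.C a)).eval x := by
    funext x; simp [eval_prod]
  rw [hfun, prod_eq d hd]
  have hderiv : deriv (fun x : ℝ => (Qpol d).eval x) (Real.cos θ) =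
      (derivative (Qpol d)).eval (Real.cos θ) := Polynomial.deriv _
  rw [hderiv]
  -- compute derivative of Qpol
  have hQ' : derivative (Qpol d) = Polynomial.C ((2:ℝ)^d)⁻¹ *
      ((((d:ℤ)+1 : ℤ) : ℝ[X]) * U ℝ (d:ℤ) - (((d:ℤ)-1 : ℤ) : ℝ[X]) * U ℝ ((d:ℤ)-2)) := by
    rw [Qpol, derivative_C_mul, derivative_sub, T_derivative_eq_U, T_derivative_eq_U]
    ring_nf
  rw [hQ']
  -- evaluate U's
  have e1 : ((d:ℝ)+1) * θ = i * π + θ := by rw [hθ]; field_simp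
  have hU1 : (U ℝ (d:ℤ)).eval (Real.cos θ) = Real.cos (i * π) := by
    have h := U_real_cos θ (d:ℤ)
    push_cast at h
    rw [e1, Real.sin_add, Real.sin_nat_mul_pi] at h
    have h' : (U ℝ (d:ℤ)).eval (Real.cos θ) * Real.sin θ = Real.cos (i*π) * Real.sin θ := by
      rw [h]; ring
    exact mul_right_cancel₀ hs h'
  have e3 : ((d:ℝ)-2+1) * θ = i * π - θ := by rw [hθ]; field_simp; ring
  have hU2 : (U ℝ ((d:ℤ)-2)).eval (Real.cos θ) = -Real.cos (i * π) := by
    have h := U_real_cos θ ((d:ℤ)-2)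
    push_cast at h
    rw [e3, Real.sin_sub, Real.sin_nat_mul_pi] at h
    have : (U ℝ ((d:ℤ)-2)).eval (Real.cos θ) * Real.sin θ = -Real.cos (i*π) * Real.sin θ := by
      rw [h]; ring
    exact mul_right_cancel₀ hs this
  rw [eval_mul, eval_C, eval_sub, eval_mul, eval_mul, eval_intCast, eval_intCast, hU1, hU2]
  push_cast
  have habs : |Real.cos (i * π)| = 1 := by
    have := Real.abs_cos_int_mul_pi (i : ℤ)
    push_cast at this
    exact this
  have hcalc : ((2:ℝ)^d)⁻¹ * (((d:ℝ)+1) * Real.cos (i*π) - ((d:ℝ)-1) * (-Real.cos (i*π)))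
      = ((2:ℝ)^d)⁻¹ * (2*d) * Real.cos (i*π) := by ring
  rw [hcalc, abs_mul, habs, mul_one, abs_of_nonneg (by positivity)]
  rw [zpow_sub₀ (two_ne_zero), zpow_one, zpow_natCast]
  ring
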